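/- An equicontinuous flow Φ : X × ℝ → X on a compact metric space is uniformly almost periodic: for every ε > 0 there exists τ > 0 such that every interval I ⊆ ℝ of length τ contains a time t with d(Φ(t,x), x) < ε for all x ∈ X. -/
import Mathlib


/-- An equicontinuous flow on a compact metric space is uniformly almost periodic. -/
theorem equicontinuous_flow_uniformly_almost_periodic
    {X : Type*} [MetricSpace X] [CompactSpace X]
    (Φ : ℝ → X → X)
    (hcont : Continuous fun p : ℝ × X => Φ p.1 p.2)
    (hΦ0 : ∀ x, Φ 0 x = x)
    (hΦadd : ∀ s t x, Φ (s + t) x = Φ s (Φ t x))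
    (hequi : ∀ ε > (0 : ℝ), ∃ δ > (0 : ℝ), ∀ x y : X, dist x y < δ →
      ∀ t : ℝ, dist (Φ t x) (Φ t y) < ε) :
    ∀ ε > (0 : ℝ), ∃ τ > (0 : ℝ), ∀ a : ℝ, ∃ t ∈ Set.Icc a (a + τ),
      ∀ x : X, dist (Φ t x) x < ε := by
  intro ε hε
  obtain ⟨δ, hδ, hδprop⟩ := hequi ε hε
  obtain ⟨δ', hδ', hδ'prop⟩ := hequi (δ / 4) (by linarith)
  -- finite δ'-net of X
  obtain ⟨C, hCsub, hCfin, hCcover⟩ :=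
    finite_cover_balls_of_compact (isCompact_univ (X := X)) hδ'
  haveI : Fintype C := hCfin.fintype
  set ψ : ℝ → (C → X) := fun t i => Φ t i.1 with hψ
  -- the range of ψ is totally bounded
  have hTB : TotallyBounded (Set.range ψ) :=
    (isCompact_univ (X := C → X)).totallyBounded.subset (Set.subset_univ _)
  rw [totallyBounded_iff_subset] at hTB
  obtain ⟨T, hTsub, hTfin, hTcover⟩ :=
    hTB {p | dist p.1 p.2 < δ / 4} (Metric.dist_mem_uniformity (by linarith))
  -- key: there is M > 0 with: every Φ r is δ-close uniformly to some Φ s, |s| ≤ M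
  have key : ∃ M > (0 : ℝ), ∀ r : ℝ, ∃ s : ℝ, |s| ≤ M ∧
      ∀ x : X, dist (Φ r x) (Φ s x) < δ := by
    -- choose preimages for elements of T
    have hchoice : ∀ y ∈ T, ∃ s : ℝ, ψ s = y := fun y hy => hTsub hy
    choose g hg using hchoice
    haveI : Fintype T := hTfin.fintype
    obtain ⟨M, hM, hMbound⟩ : ∃ M > (0 : ℝ), ∀ y (hy : y ∈ T), |g y hy| ≤ M := by
      classical
      by_cases hT : T.Nonempty
      · set Fs : Finset ℝ := hTfin.toFinset.attach.image
          (fun y => |g y.1 (hTfin.mem_toFinset.mp y.2)|) with hFs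
        have hFsne : Fs.Nonempty := by
          simp only [Fs, Finset.image_nonempty, Finset.attach_nonempty_iff,
            Set.Finite.toFinset_nonempty]
          exact hT
        have hmem : ∀ y (hy : y ∈ T), |g y hy| ∈ Fs := fun y hy => by
          simp only [Fs, Finset.mem_image, Finset.mem_attach]
          exact ⟨⟨y, hTfin.mem_toFinset.mpr hy⟩, trivial, rfl⟩
        have hle : ∀ y (hy : y ∈ T), |g y hy| ≤ Fs.sup' hFsne (fun x => x) :=
          fun y hy => Finset.le_sup' (fun x => x) (hmem y hy)
        obtain ⟨y0, hy0⟩ := hT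
        refine ⟨Fs.sup' hFsne (fun x => x) + 1, ?_, fun y hy => by linarith [hle y hy]⟩
        linarith [abs_nonneg (g y0 hy0), hle y0 hy0]
      · exact ⟨1, one_pos, fun y hy => absurd ⟨y, hy⟩ hT⟩
    refine ⟨M, hM, fun r => ?_⟩
    have hr : ψ r ∈ Set.range ψ := ⟨r, rfl⟩
    obtain ⟨y, hy, hdy⟩ := Set.mem_iUnion₂.mp (hTcover hr)
    refine ⟨g y hy, hMbound y hy, fun x => ?_⟩
    -- pick a net point near x
    obtain ⟨c, hcC, hcx⟩ := Set.mem_iUnion₂.mp (hCcover (Set.mem_univ x))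
    have hcx' : dist x c < δ' := Metric.mem_ball.mp hcx
    have h1 : dist (Φ r x) (Φ r c) < δ / 4 := hδ'prop x c hcx' r
    have h2 : dist (Φ (g y hy) x) (Φ (g y hy) c) < δ / 4 := hδ'prop x c hcx' (g y hy)
    have h3 : dist (Φ r c) (Φ (g y hy) c) < δ / 4 := by
      have hd : dist (ψ r) (ψ (g y hy)) < δ / 4 := by
        rw [hg y hy]; exact hdy
      have := (dist_pi_lt_iff (by linarith : (0:ℝ) < δ / 4)).mp hd ⟨c, hcC⟩
      simpa [hψ] using this
    calc dist (Φ r x) (Φ (g y hy) x)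
        ≤ dist (Φ r x) (Φ r c) + dist (Φ r c) (Φ (g y hy) c)
            + dist (Φ (g y hy) c) (Φ (g y hy) x) := dist_triangle4 _ _ _ _
      _ < δ / 4 + δ / 4 + δ / 4 := by
          rw [dist_comm (Φ (g y hy) c)]
          exact add_lt_add (add_lt_add h1 h3) h2
      _ < δ := by linarith
  obtain ⟨M, hM, hMprop⟩ := key
  refine ⟨2 * M + 2, by linarith, fun a => ?_⟩
  obtain ⟨s, hsM, hs⟩ := hMprop (a + M + 1)
  have hsabs := abs_le.mp hsM
  refine ⟨-s + (a + M + 1), ⟨by linarith [hsabs.2], by linarith [hsabs.1]⟩, fun x => ?_⟩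
  have := hδprop (Φ (a + M + 1) x) (Φ s x) (hs x) (-s)
  rw [← hΦadd (-s) (a + M + 1) x, ← hΦadd (-s) s x] at this
  simpa [hΦ0] using this
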